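/- Define for symmetric positive-definite matrices g₀, g₁: a = det(g₀)^{1/4}, b = det(g₁)^{1/4}, k = log(g₀⁻¹g₁), k₀ = k − (Tr k/n)Id, κ = √(n·Tr(k₀²))/4, θ = min(π, κ). Then the pointwise squared Ebin distance d(g₀,g₁)² = (16/n)(a² − 2ab·cos θ + b²) is nonnegative, and it is zero if and only if g₀ = g₁. -/

import Mathlib

/- STATEMENT 7: With a = det(g₀)^{1/4}, b = det(g₁)^{1/4}, k = log(g₀⁻¹g₁),
k₀ = k − (Tr k/n)Id, κ = √(n·Tr(k₀²))/4, θ = min(π, κ), the pointwise squared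
Ebin distance d(g₀,g₁)² = (16/n)(a² − 2ab cos θ + b²) is nonnegative, and it is
zero iff g₀ = g₁.  The matrix logarithm k is represented through a (hypothesized)
real diagonalization of g₀⁻¹g₁ with positive eigenvalues, which exists by
Statement 3. -/

open Matrix

theorem ebin_pointwise_distance_nonneg_eq_zero_iff {n : ℕ} (hn : 2 ≤ n)
    (g₀ g₁ : Matrix (Fin n) (Fin n) ℝ) (h₀ : g₀.PosDef) (h₁ : g₁.PosDef)
    (V : Matrix (Fin n) (Fin n) ℝ) (d : Fin n → ℝ)
    (hV : IsUnit V.det) (hd : ∀ i, 0 < d i)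
    (hdiag : g₀⁻¹ * g₁ = V * Matrix.diagonal d * V⁻¹) :
    let k : Matrix (Fin n) (Fin n) ℝ :=
      V * Matrix.diagonal (fun i => Real.log (d i)) * V⁻¹
    let k₀ : Matrix (Fin n) (Fin n) ℝ := k - (Matrix.trace k / n) • 1
    let κ : ℝ := Real.sqrt (n * Matrix.trace (k₀ * k₀)) / 4
    let θ : ℝ := min Real.pi κ
    let a : ℝ := g₀.det ^ ((1 : ℝ) / 4)
    let b : ℝ := g₁.det ^ ((1 : ℝ) / 4)
    let dsq : ℝ := (16 / n) * (a ^ 2 - 2 * a * b * Real.cos θ + b ^ 2)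
    0 ≤ dsq ∧ (dsq = 0 ↔ g₀ = g₁) := by
  intro k k₀ κ θ a b dsq
  have hn0 : (0:ℝ) < n := by positivity
  have hVi : V⁻¹ * V = 1 := Matrix.nonsing_inv_mul V hV
  have hiV : V * V⁻¹ = 1 := Matrix.mul_nonsing_inv V hV
  set e : Fin n → ℝ := fun i => Real.log (d i) with he
  have hconj : ∀ A B : Matrix (Fin n) (Fin n) ℝ,
      (V * A * V⁻¹) * (V * B * V⁻¹) = V * (A * B) * V⁻¹ := by
    intro A B
    simp only [Matrix.mul_assoc]
    rw [← Matrix.mul_assoc V⁻¹ V, hVi, Matrix.one_mul]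
  have htrconj : ∀ A : Matrix (Fin n) (Fin n) ℝ,
      Matrix.trace (V * A * V⁻¹) = Matrix.trace A := by
    intro A
    rw [Matrix.trace_mul_cycle, hVi, Matrix.one_mul]
  have htrk : Matrix.trace k = ∑ i, e i := by
    show Matrix.trace (V * Matrix.diagonal e * V⁻¹) = _
    rw [htrconj, Matrix.trace_diagonal]
  set c : ℝ := Matrix.trace k / n with hc
  set f : Fin n → ℝ := fun i => e i - c with hf
  have hsmul1 : (c • (1 : Matrix (Fin n) (Fin n) ℝ)) = Matrix.diagonal (fun _ => c) := by
    ext i j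
    simp [Matrix.one_apply, Matrix.diagonal_apply]
  have hk₀ : k₀ = V * Matrix.diagonal f * V⁻¹ := by
    show k - c • 1 = _
    have h1 : (Matrix.diagonal f : Matrix (Fin n) (Fin n) ℝ)
        = Matrix.diagonal e - Matrix.diagonal (fun _ => c) := by
      rw [← Matrix.diagonal_sub]
    have h2 : V * Matrix.diagonal (fun _ : Fin n => c) * V⁻¹ = c • 1 := by
      rw [← hsmul1, Matrix.mul_smul, Matrix.mul_one, Matrix.smul_mul, hiV]
    rw [h1, Matrix.mul_sub, Matrix.sub_mul, h2]
  have htr2 : Matrix.trace (k₀ * k₀) = ∑ i, f i ^ 2 := by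
    rw [hk₀, hconj, Matrix.diagonal_mul_diagonal, htrconj, Matrix.trace_diagonal]
    exact Finset.sum_congr rfl fun i _ => (sq (f i)).symm
  have hS : (0:ℝ) ≤ ∑ i, f i ^ 2 := Finset.sum_nonneg fun i _ => sq_nonneg _
  have hκ0 : 0 ≤ κ := by positivity
  have hθ0 : 0 ≤ θ := le_min Real.pi_pos.le hκ0
  have hθπ : θ ≤ Real.pi := min_le_left _ _
  have ha : 0 < a := Real.rpow_pos_of_pos h₀.det_pos _
  have hb : 0 < b := Real.rpow_pos_of_pos h₁.det_pos _
  have hcos : Real.cos θ ≤ 1 := Real.cos_le_one θ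
  have hquad : 0 ≤ a ^ 2 - 2 * a * b * Real.cos θ + b ^ 2 := by
    nlinarith [sq_nonneg (a - b), mul_pos ha hb]
  have hcoef : (0:ℝ) < 16 / n := by positivity
  constructor
  · positivity
  constructor
  · -- dsq = 0 → g₀ = g₁
    intro hzero
    have hq0 : a ^ 2 - 2 * a * b * Real.cos θ + b ^ 2 = 0 := by
      have := mul_eq_zero.mp hzero
      rcases this with h | h
      · exact absurd h hcoef.ne'
      · exact h
    have hcos1 : Real.cos θ = 1 := by
      have h1 : 1 ≤ Real.cos θ := by nlinarith [sq_nonneg (a - b), mul_pos ha hb]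
      linarith
    have hab : a = b := by
      rw [hcos1] at hq0
      have hsq : (a - b) ^ 2 = 0 := by linear_combination hq0
      have := sq_eq_zero_iff.mp hsq
      linarith
    have hθeq : θ = 0 := by
      have := (Real.cos_eq_one_iff_of_lt_of_lt
        (by linarith [Real.pi_pos] : -(2 * Real.pi) < θ)
        (by linarith [Real.pi_pos] : θ < 2 * Real.pi)).mp hcos1
      exact this
    have hκeq : κ = 0 := by
      rcases min_eq_iff.mp hθeq with h | h
      · exact absurd h.1 Real.pi_ne_zero
      · exact h.1
    have hSzero : ∑ i, f i ^ 2 = 0 := by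
      have h4' : Real.sqrt (↑n * Matrix.trace (k₀ * k₀)) / 4 = 0 := hκeq
      have h4 : Real.sqrt (↑n * Matrix.trace (k₀ * k₀)) = 0 := by linarith
      have h5 := Real.sqrt_eq_zero'.mp h4
      rw [htr2] at h5
      nlinarith
    have hfi : ∀ i, f i = 0 := by
      intro i
      have := (Finset.sum_eq_zero_iff_of_nonneg (fun i _ => sq_nonneg (f i))).mp hSzero i (Finset.mem_univ i)
      exact pow_eq_zero_iff two_ne_zero |>.mp this
    have hei : ∀ i, e i = c := fun i => by have := hfi i; simp [hf] at this; linarith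
    have hdi : ∀ i, d i = Real.exp c := by
      intro i
      rw [← hei i]
      exact (Real.exp_log (hd i)).symm
    -- det g₀ = det g₁ from a = b
    have hdet : g₀.det = g₁.det := by
      have h4 := congrArg (fun x : ℝ => x ^ (4:ℝ)) hab
      simp only [a, b, ← Real.rpow_mul h₀.det_pos.le, ← Real.rpow_mul h₁.det_pos.le] at h4
      norm_num at h4
      exact h4
    have hg0 : IsUnit g₀.det := isUnit_iff_ne_zero.mpr h₀.det_pos.ne'
    have hdet1 : (g₀⁻¹ * g₁).det = 1 := by
      rw [Matrix.det_mul, Matrix.det_nonsing_inv, Ring.inverse_eq_inv', hdet]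
      exact inv_mul_cancel₀ h₁.det_pos.ne'
    have hdV : V.det ≠ 0 := hV.ne_zero
    have hdet2 : (g₀⁻¹ * g₁).det = Real.exp (n * c) := by
      rw [hdiag, Matrix.det_mul, Matrix.det_mul, Matrix.det_diagonal,
        Matrix.det_nonsing_inv, Ring.inverse_eq_inv']
      have hp : ∏ i, d i = Real.exp c ^ n := by
        rw [Finset.prod_congr rfl (fun i _ => hdi i), Finset.prod_const,
          Finset.card_univ, Fintype.card_fin]
      rw [hp, ← Real.exp_nat_mul]
      field_simp
    have hc0 : c = 0 := by
      have hnc : (n:ℝ) * c = 0 := by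
        have h : Real.exp ((n:ℝ) * c) = 1 := by rw [← hdet2, hdet1]
        have h2 := congrArg Real.log h
        rwa [Real.log_exp, Real.log_one] at h2
      rcases mul_eq_zero.mp hnc with h | h
      · exact absurd h hn0.ne'
      · exact h
    have hd1 : Matrix.diagonal d = 1 := by
      have : d = fun _ => (1:ℝ) := funext fun i => by rw [hdi i, hc0, Real.exp_zero]
      rw [this, Matrix.diagonal_one]
    have hone : g₀⁻¹ * g₁ = 1 := by rw [hdiag, hd1, Matrix.mul_one, hiV]
    have := congrArg (fun M => g₀ * M) hone
    simpa [← Matrix.mul_assoc, Matrix.mul_nonsing_inv g₀ hg0] using this.symm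
  · -- g₀ = g₁ → dsq = 0
    intro heq
    have hg1 : IsUnit g₁.det := isUnit_iff_ne_zero.mpr h₁.det_pos.ne'
    have h' : V * Matrix.diagonal d * V⁻¹ = 1 := by
      rw [← hdiag, heq, Matrix.nonsing_inv_mul g₁ hg1]
    have hd1 : Matrix.diagonal d = (1 : Matrix (Fin n) (Fin n) ℝ) := by
      calc Matrix.diagonal d = (V⁻¹ * V) * Matrix.diagonal d * (V⁻¹ * V) := by
            rw [hVi, Matrix.one_mul, Matrix.mul_one]
        _ = V⁻¹ * (V * Matrix.diagonal d * V⁻¹) * V := by simp only [Matrix.mul_assoc]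
        _ = V⁻¹ * 1 * V := by rw [h']
        _ = 1 := by rw [Matrix.mul_one, hVi]
    have hdi1 : ∀ i, d i = 1 := by
      intro i
      have := congrFun (congrFun hd1 i) i
      simpa [Matrix.diagonal_apply, Matrix.one_apply] using this
    have he0 : ∀ i, e i = 0 := fun i => by simp [he, hdi1 i]
    have hc0 : c = 0 := by
      rw [hc, htrk]
      simp [he0]
    have hf0 : ∀ i, f i = 0 := fun i => by simp [hf, he0 i, hc0]
    have htrz : Matrix.trace (k₀ * k₀) = 0 := by
      rw [htr2]
      exact Finset.sum_eq_zero fun i _ => by rw [hf0 i]; ring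
    have hκz : κ = 0 := by
      show Real.sqrt (↑n * Matrix.trace (k₀ * k₀)) / 4 = 0
      rw [htrz]
      simp
    have hθz : θ = 0 := by
      show min Real.pi κ = 0
      rw [hκz]
      exact min_eq_right Real.pi_pos.le
    have hab : a = b := by
      show g₀.det ^ ((1:ℝ)/4) = g₁.det ^ ((1:ℝ)/4)
      rw [heq]
    show (16 / (n:ℝ)) * (a ^ 2 - 2 * a * b * Real.cos θ + b ^ 2) = 0
    rw [hθz, Real.cos_zero, ← hab]
    ring
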